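/- Let m ≥ 1, let A be an m×m real matrix, B ∈ ℝ^m a column vector, C a 1×m real row vector, and K ∈ ℝ^m a column vector. Let u : ℝ → ℝ be continuous, and let x, s : ℝ → ℝ^m be differentiable functions satisfying x′(t) = A x(t) + B u(t) and s′(t) = (A + KC) s(t) + B u(t) − K C x(t) for all t ≥ 0. Then x(t) − s(t) = exp((A + KC)t) (x(0) − s(0)) for all t ≥ 0. Moreover, if every complex eigenvalue of A + KC has negative real part, then lim_{t→∞} (x(t) − s(t)) = 0. -/

import Mathlib

open Filter Matrix

section AuxObserver

open NormedSpace

attribute [local instance] Matrix.linftyOpNormedRing Matrix.linftyOpNormedAlgebra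

/-- `N ↦ N *ᵥ c` as a continuous linear map on matrices. -/
noncomputable def mulVecCLM' {m : ℕ} (c : Fin m → ℝ) :
    Matrix (Fin m) (Fin m) ℝ →L[ℝ] (Fin m → ℝ) :=
  LinearMap.toContinuousLinearMap
    { toFun := fun N => N.mulVec c
      map_add' := fun N₁ N₂ => Matrix.add_mulVec N₁ N₂ c
      map_smul' := fun r N => by ext i; simp [Matrix.smul_mulVec] }

theorem aux_exp_sol' {m : ℕ} (M : Matrix (Fin m) (Fin m) ℝ) (c : Fin m → ℝ) (t : ℝ) :
    HasDerivAt (fun t : ℝ => (exp (t • M)).mulVec c)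
      (M.mulVec ((exp (t • M)).mulVec c)) t := by
  have hE : HasDerivAt (fun t : ℝ => exp (t • M)) (M * exp (t • M)) t :=
    hasDerivAt_exp_smul_const' M t
  have := ((mulVecCLM' c).hasFDerivAt.comp_hasDerivAt t hE)
  change HasDerivAt _ ((M * exp (t • M)).mulVec c) t at this
  simpa [mulVecCLM', ← Matrix.mulVec_mulVec, Function.comp_def] using this

theorem aux_unique' {m : ℕ} (M : Matrix (Fin m) (Fin m) ℝ) (e : ℝ → Fin m → ℝ)
    (he : ∀ t : ℝ, 0 ≤ t → HasDerivAt e (M.mulVec (e t)) t) :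
    ∀ t : ℝ, 0 ≤ t → e t = (exp (t • M)).mulVec (e 0) := by
  intro t ht
  set g : ℝ → Fin m → ℝ := fun t => (exp (t • M)).mulVec (e 0) with hg
  have key : Set.EqOn e g (Set.Icc 0 t) := by
    apply ODE_solution_unique (v := fun _ y => M.mulVec y)
      (K := ‖(Matrix.mulVecLin M).toContinuousLinearMap‖₊)
    · intro s
      exact (Matrix.mulVecLin M).toContinuousLinearMap.lipschitz
    · intro s hs
      exact ((he s hs.1).continuousAt).continuousWithinAt
    · intro s hs
      exact (he s hs.1).hasDerivWithinAt
    · intro s hs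
      exact ((aux_exp_sol' M (e 0) s).continuousAt).continuousWithinAt
    · intro s hs
      exact (aux_exp_sol' M (e 0) s).hasDerivWithinAt
    · simp [hg]
  exact key ⟨ht, le_refl t⟩

theorem vecMulVec_mulVec'' {m : ℕ} {R : Type*} [CommRing R] (K C v : Fin m → R) :
    (Matrix.vecMulVec K C).mulVec v = (C ⬝ᵥ v) • K := by
  ext i
  simp only [Matrix.mulVec, Matrix.vecMulVec_apply, dotProduct, Pi.smul_apply, smul_eq_mul,
    Finset.sum_mul, Finset.mul_sum]
  apply Finset.sum_congr rfl
  intro j _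
  ring

/-- `N ↦ N *ᵥ c` as a continuous linear map on complex matrices. -/
noncomputable def mulVecCLMC' {m : ℕ} (c : Fin m → ℂ) :
    Matrix (Fin m) (Fin m) ℂ →L[ℂ] (Fin m → ℂ) :=
  LinearMap.toContinuousLinearMap
    { toFun := fun N => N.mulVec c
      map_add' := fun N₁ N₂ => Matrix.add_mulVec N₁ N₂ c
      map_smul' := fun r N => by ext i; simp [Matrix.smul_mulVec] }

theorem exp_apply_genEig' {m : ℕ} (Mc : Matrix (Fin m) (Fin m) ℂ) (μ : ℂ) (k : ℕ)
    (v : Fin m → ℂ) (hk : (((Mc - μ • 1) ^ k)).mulVec v = 0) (t : ℝ) :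
    (exp ((t : ℂ) • Mc)).mulVec v
      = ∑ n ∈ Finset.range k,
          (Complex.exp ((t : ℂ) * μ) * ((t : ℂ) ^ n * (n.factorial : ℂ)⁻¹)) •
            ((Mc - μ • 1) ^ n).mulVec v := by
  set N : Matrix (Fin m) (Fin m) ℂ := Mc - μ • 1 with hN
  have hsplit : (t : ℂ) • Mc = algebraMap ℂ (Matrix (Fin m) (Fin m) ℂ) ((t : ℂ) * μ) + (t : ℂ) • N := by
    rw [Algebra.algebraMap_eq_smul_one, hN, smul_sub, mul_smul]
    abel
  have hcomm : Commute (algebraMap ℂ (Matrix (Fin m) (Fin m) ℂ) ((t : ℂ) * μ)) ((t : ℂ) • N) :=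
    Algebra.commutes _ _
  rw [hsplit, Matrix.exp_add_of_commute _ _ hcomm]
  erw [← map_exp (algebraMap ℂ (Matrix (Fin m) (Fin m) ℂ)) (continuous_algebraMap _ _)]
  rw [← Complex.exp_eq_exp_ℂ, Algebra.algebraMap_eq_smul_one, smul_mul_assoc, one_mul,
    Matrix.smul_mulVec]
  have hexpN : (exp ((t : ℂ) • N)).mulVec v
      = ∑ n ∈ Finset.range k, ((t : ℂ) ^ n * (n.factorial : ℂ)⁻¹) • (N ^ n).mulVec v := by
    have h1 : (exp ((t : ℂ) • N)).mulVec v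
        = mulVecCLMC' v (∑' n : ℕ, ((n.factorial : ℂ)⁻¹) • ((t : ℂ) • N) ^ n) := by
      rw [exp_eq_tsum ℂ]; rfl
    rw [h1, (mulVecCLMC' v).map_tsum (expSeries_summable' (𝕂 := ℂ) ((t : ℂ) • N))]
    rw [tsum_eq_sum (s := Finset.range k)]
    · apply Finset.sum_congr rfl
      intro n hn
      simp only [mulVecCLMC', LinearMap.toContinuousLinearMap, smul_pow]
      simp [Matrix.smul_mulVec, smul_smul, mul_comm]
    · intro n hn
      rw [Finset.mem_range, not_lt] at hn
      have : N ^ n = N ^ (n - k) * N ^ k := by rw [← pow_add, Nat.sub_add_cancel hn]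
      simp only [mulVecCLMC', LinearMap.toContinuousLinearMap, smul_pow]
      simp only [LinearEquiv.coe_mk, LinearMap.coe_mk, AddHom.coe_mk]
      rw [ContinuousLinearMap.coe_mk']
      simp only [LinearMap.coe_mk, AddHom.coe_mk]
      rw [Matrix.smul_mulVec, Matrix.smul_mulVec, this,
        ← Matrix.mulVec_mulVec, hk]
      simp
  rw [hexpN, Finset.smul_sum]
  apply Finset.sum_congr rfl
  intro n _
  rw [smul_smul]

theorem real_decay' {c : ℝ} (hc : c < 0) (n : ℕ) :
    Tendsto (fun t : ℝ => t ^ n * Real.exp (c * t)) atTop (nhds 0) := by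
  have h1 : Tendsto (fun t : ℝ => (-c) * t) atTop atTop :=
    Tendsto.const_mul_atTop (by linarith) tendsto_id
  have h2 := (Real.tendsto_pow_mul_exp_neg_atTop_nhds_zero n).comp h1
  have h3 := h2.const_mul (((-c)⁻¹) ^ n)
  rw [mul_zero] at h3
  apply h3.congr
  intro t
  have hc0 : (-c) ≠ 0 := by linarith
  show (-c)⁻¹ ^ n * ((-c * t) ^ n * Real.exp (-(-c * t))) = t ^ n * Real.exp (c * t)
  rw [mul_pow, neg_mul, neg_neg, ← mul_assoc, ← mul_assoc, ← mul_pow, inv_mul_cancel₀ hc0,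
    one_pow, one_mul]

theorem scalar_decay' {μ : ℂ} (hμ : μ.re < 0) (n : ℕ) :
    Tendsto (fun t : ℝ => Complex.exp ((t : ℂ) * μ) * ((t : ℂ) ^ n * (n.factorial : ℂ)⁻¹))
      atTop (nhds 0) := by
  rw [tendsto_zero_iff_norm_tendsto_zero]
  have heq : ∀ᶠ t : ℝ in atTop, (t ^ n * Real.exp (μ.re * t)) * (n.factorial : ℝ)⁻¹
      = ‖Complex.exp ((t : ℂ) * μ) * ((t : ℂ) ^ n * (n.factorial : ℂ)⁻¹)‖ := by
    filter_upwards [eventually_ge_atTop (0:ℝ)] with t ht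
    simp [Complex.norm_exp, abs_of_nonneg ht, mul_comm]
    ring
  have := (real_decay' hμ n).mul_const ((n.factorial : ℝ)⁻¹)
  rw [zero_mul] at this
  exact this.congr' heq

theorem complex_stab' {m : ℕ} (Mc : Matrix (Fin m) (Fin m) ℂ)
    (hspec : ∀ μ : ℂ, μ ∈ spectrum ℂ Mc → μ.re < 0) (v : Fin m → ℂ) :
    Tendsto (fun t : ℝ => (exp ((t : ℂ) • Mc)).mulVec v) atTop (nhds 0) := by
  set f : Module.End ℂ (Fin m → ℂ) := Matrix.toLinAlgEquiv' Mc with hf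
  set P : Submodule ℂ (Fin m → ℂ) :=
    { carrier := {w | Tendsto (fun t : ℝ => (exp ((t : ℂ) • Mc)).mulVec w) atTop (nhds 0)}
      add_mem' := by
        intro a b ha hb
        have := ha.add hb
        rw [add_zero] at this
        simpa [Matrix.mulVec_add] using this
      zero_mem' := by simp [Matrix.mulVec_zero, tendsto_const_nhds]
      smul_mem' := by
        intro c a ha
        have := ha.const_smul c
        rw [smul_zero] at this
        simpa [Matrix.mulVec_smul] using this } with hP
  suffices h : ∀ μ : ℂ, f.maxGenEigenspace μ ≤ P by
    have htop := Module.End.iSup_maxGenEigenspace_eq_top f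
    have hle : (⊤ : Submodule ℂ (Fin m → ℂ)) ≤ P := htop ▸ iSup_le h
    exact hle Submodule.mem_top
  intro μ w hw
  rcases eq_or_ne w 0 with rfl | hw0
  · exact P.zero_mem
  have hμ : μ.re < 0 := by
    apply hspec
    have h1 : f.HasUnifEigenvalue μ ⊤ := by
      intro hbot
      apply hw0
      have hb : f.maxGenEigenspace μ = ⊥ := hbot
      simpa [hb] using hw
    have h2 : μ ∈ spectrum ℂ f := (h1.lt (by norm_num)).mem_spectrum
    rwa [hf, AlgEquiv.spectrum_eq] at h2
  obtain ⟨k, hk⟩ := (Module.End.mem_maxGenEigenspace f μ w).mp hw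
  have hkm : ((Mc - μ • 1) ^ k).mulVec w = 0 := by
    have h1 : Matrix.toLinAlgEquiv' ((Mc - μ • 1) ^ k) = (f - μ • 1) ^ k := by
      rw [hf]
      simp only [map_pow, map_sub, _root_.map_smul, _root_.map_one]
    calc ((Mc - μ • 1) ^ k).mulVec w
        = (Matrix.toLinAlgEquiv' ((Mc - μ • 1) ^ k)) w :=
          (Matrix.toLinAlgEquiv'_apply _ _).symm
      _ = ((f - μ • 1) ^ k) w := by rw [h1]
      _ = 0 := hk
  show Tendsto _ atTop _
  have hcongr : ∀ t : ℝ, (exp ((t : ℂ) • Mc)).mulVec w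
      = ∑ n ∈ Finset.range k,
          (Complex.exp ((t : ℂ) * μ) * ((t : ℂ) ^ n * (n.factorial : ℂ)⁻¹)) •
            ((Mc - μ • 1) ^ n).mulVec w := fun t => exp_apply_genEig' Mc μ k w hkm t
  rw [show (0 : Fin m → ℂ) = ∑ n ∈ Finset.range k, (0 : Fin m → ℂ) by simp]
  apply Tendsto.congr (fun t => (hcongr t).symm)
  apply tendsto_finset_sum
  intro n _
  have := (scalar_decay' hμ n).smul_const (((Mc - μ • 1) ^ n).mulVec w)
  rwa [zero_smul] at this

theorem real_stab' {m : ℕ} (M : Matrix (Fin m) (Fin m) ℝ)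
    (hspec : ∀ μ : ℂ, μ ∈ spectrum ℂ (M.map (algebraMap ℝ ℂ)) → μ.re < 0) (c : Fin m → ℝ) :
    Tendsto (fun t : ℝ => (exp (t • M)).mulVec c) atTop (nhds 0) := by
  set Mc := M.map (algebraMap ℝ ℂ) with hMc
  have hcont : Continuous ((algebraMap ℝ ℂ).mapMatrix :
      Matrix (Fin m) (Fin m) ℝ →+* Matrix (Fin m) (Fin m) ℂ) := by
    show Continuous fun N : Matrix (Fin m) (Fin m) ℝ => N.map (algebraMap ℝ ℂ)
    exact continuous_id.matrix_map (continuous_algebraMap ℝ ℂ)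
  have hmap : ∀ t : ℝ, (exp (t • M)).map (algebraMap ℝ ℂ) = exp ((t : ℂ) • Mc) := by
    intro t
    have h1 := map_exp ((algebraMap ℝ ℂ).mapMatrix :
      Matrix (Fin m) (Fin m) ℝ →+* Matrix (Fin m) (Fin m) ℂ) hcont (t • M)
    have h2 : ((algebraMap ℝ ℂ).mapMatrix : Matrix (Fin m) (Fin m) ℝ →+* _) (t • M)
        = (t : ℂ) • Mc := by
      ext i j
      simp [RingHom.mapMatrix_apply, Matrix.map_apply, Complex.real_smul, hMc]
    rw [h2] at h1
    exact h1
  have hC := complex_stab' Mc hspec (fun i => (c i : ℂ))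
  rw [tendsto_pi_nhds]
  intro i
  have h3 : Tendsto (fun t : ℝ => (exp ((t : ℂ) • Mc)).mulVec (fun i => (c i : ℂ)) i)
      atTop (nhds 0) := by
    have := ((continuous_apply i).tendsto (0 : Fin m → ℂ)).comp hC
    simpa [Function.comp_def] using this
  have h4 : ∀ t : ℝ, ((exp (t • M)).mulVec c i : ℂ)
      = (exp ((t : ℂ) • Mc)).mulVec (fun i => (c i : ℂ)) i := by
    intro t
    rw [← hmap t]
    exact RingHom.map_mulVec (algebraMap ℝ ℂ) _ c i
  have h5 : Tendsto (fun t : ℝ => ((exp (t • M)).mulVec c i : ℂ)) atTop (nhds 0) := by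
    simpa [h4] using h3
  have h6 := (Complex.continuous_re.tendsto (0 : ℂ)).comp h5
  simpa [Function.comp_def] using h6

end AuxObserver

/-- **Observer error dynamics.** If `x′ = Ax + Bu` and `s′ = (A+KC)s + Bu − K(Cx)` on `[0,∞)`,
then `x(t) − s(t) = exp((A+KC)t)(x(0) − s(0))` for all `t ≥ 0`; moreover, if every complex
eigenvalue of `A + KC` has negative real part, then `x(t) − s(t) → 0` as `t → ∞`. -/
theorem observer_error_dynamics
    (m : ℕ) (hm : 1 ≤ m)
    (A : Matrix (Fin m) (Fin m) ℝ) (B C K : Fin m → ℝ)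
    (u : ℝ → ℝ) (hu : Continuous u)
    (x s : ℝ → Fin m → ℝ)
    (hx : ∀ t : ℝ, 0 ≤ t → HasDerivAt x (A.mulVec (x t) + u t • B) t)
    (hs : ∀ t : ℝ, 0 ≤ t → HasDerivAt s
      ((A + Matrix.vecMulVec K C).mulVec (s t) + u t • B - (C ⬝ᵥ x t) • K) t) :
    (∀ t : ℝ, 0 ≤ t →
      x t - s t = (NormedSpace.exp (t • (A + Matrix.vecMulVec K C))).mulVec (x 0 - s 0)) ∧
    ((∀ μ : ℂ, μ ∈ spectrum ℂ ((A + Matrix.vecMulVec K C).map (algebraMap ℝ ℂ)) → μ.re < 0) →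
      Tendsto (fun t => x t - s t) atTop (nhds 0)) := by
  set M : Matrix (Fin m) (Fin m) ℝ := A + Matrix.vecMulVec K C with hM
  have he : ∀ t : ℝ, 0 ≤ t → HasDerivAt (fun t => x t - s t) (M.mulVec (x t - s t)) t := by
    intro t ht
    have := (hx t ht).sub (hs t ht)
    refine this.congr_deriv ?_
    simp only [hM, Matrix.add_mulVec, Matrix.mulVec_sub, vecMulVec_mulVec'']
    abel
  have part1 : ∀ t : ℝ, 0 ≤ t →
      x t - s t = (NormedSpace.exp (t • M)).mulVec (x 0 - s 0) := by
    intro t ht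
    have := aux_unique' M (fun t => x t - s t) he t ht
    simpa using this
  refine ⟨part1, ?_⟩
  intro hspec
  have hR := real_stab' M hspec (x 0 - s 0)
  apply hR.congr'
  filter_upwards [eventually_ge_atTop (0:ℝ)] with t ht
  exact (part1 t ht).symm
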